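/- Every $2\times 2$ special unitary matrix can be written as a product of matrices of the form $J(\alpha) = \frac{1}{\sqrt{2}}\begin{pmatrix} 1 & e^{i\alpha} \\ 1 & -e^{i\alpha}\end{pmatrix}$ with $\alpha \in \mathbb{R}$, up to a global phase. Concretely, for every $U \in SU(2)$ there exist $\alpha, \beta, \gamma, \delta \in \mathbb{R}$ and $\phi \in \mathbb{R}$ such that $U = e^{i\phi} J(0) J(\alpha) J(\beta) J(\gamma)$. -/

import Mathlib

open Matrix

/-- The operator `J(α) = (1/√2) [[1, e^{iα}], [1, -e^{iα}]]`. -/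
noncomputable def Jmat (α : ℝ) : Matrix (Fin 2) (Fin 2) ℂ :=
  (((Real.sqrt 2 : ℝ) : ℂ))⁻¹ •
    !![1, Complex.exp (Complex.I * α); 1, -Complex.exp (Complex.I * α)]

lemma Jprod (α β γ : ℝ) :
    Jmat 0 * Jmat α * Jmat β * Jmat γ =
      (2:ℂ)⁻¹ • !![1 + Complex.exp (Complex.I*β),
                   Complex.exp (Complex.I*γ) * (1 - Complex.exp (Complex.I*β));
                   Complex.exp (Complex.I*α) * (1 - Complex.exp (Complex.I*β)),
                   Complex.exp (Complex.I*α) * Complex.exp (Complex.I*γ) * (1 + Complex.exp (Complex.I*β))] := by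
  have hne : ((Real.sqrt 2 : ℝ) : ℂ) ≠ 0 := by
    simp [Real.sqrt_ne_zero'.mpr (by norm_num : (0:ℝ) < 2)]
  have h2 : ((Real.sqrt 2 : ℝ) : ℂ) * ((Real.sqrt 2 : ℝ) : ℂ) = 2 := by
    rw [← Complex.ofReal_mul, Real.mul_self_sqrt (by norm_num)]
    norm_num
  have hcoef : (((Real.sqrt 2 : ℝ) : ℂ))⁻¹ * ((((Real.sqrt 2 : ℝ) : ℂ))⁻¹ * ((((Real.sqrt 2 : ℝ) : ℂ))⁻¹ * (((Real.sqrt 2 : ℝ) : ℂ))⁻¹)) = (4:ℂ)⁻¹ := by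
    rw [show (4:ℂ) = (((Real.sqrt 2 : ℝ) : ℂ) * ((Real.sqrt 2 : ℝ) : ℂ)) * (((Real.sqrt 2 : ℝ) : ℂ) * ((Real.sqrt 2 : ℝ) : ℂ)) by rw [h2]; norm_num]
    field_simp
  simp only [Jmat, Matrix.smul_mul, Matrix.mul_smul, smul_smul, Matrix.mul_fin_two, hcoef,
    Complex.ofReal_zero, mul_zero, Complex.exp_zero]
  ext i j
  fin_cases i <;> fin_cases j <;> simp <;> ring

/-- Every `U ∈ SU(2)` can be written, up to a global phase, as `J(0) J(α) J(β) J(γ)`. -/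
theorem su2_J_decomposition (U : Matrix (Fin 2) (Fin 2) ℂ)
    (hU : U ∈ Matrix.unitaryGroup (Fin 2) ℂ) (hdet : U.det = 1) :
    ∃ α β γ δ φ : ℝ,
      U = Complex.exp (Complex.I * φ) • (Jmat 0 * Jmat α * Jmat β * Jmat γ) := by
  have h1 : star U * U = 1 := hU.1
  have hadj : star U = U.adjugate := by
    have h2 : U * U.adjugate = 1 := by
      rw [Matrix.mul_adjugate, hdet, one_smul]
    calc star U = star U * (U * U.adjugate) := by rw [h2, mul_one]
      _ = (star U * U) * U.adjugate := by rw [mul_assoc]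
      _ = U.adjugate := by rw [h1, one_mul]
  set a := U 0 0 with ha
  set b := U 0 1 with hb
  have hd : U 1 1 = (starRingEnd ℂ) a := by
    have h := congrFun (congrFun hadj 0) 0
    simp [Matrix.adjugate_fin_two] at h
    exact h.symm
  have hc : U 1 0 = -(starRingEnd ℂ) b := by
    have h := congrFun (congrFun hadj 0) 1
    simp [Matrix.adjugate_fin_two] at h
    rw [← Complex.conj_conj (U 1 0), h, map_neg]
  set r := ‖a‖ with hrdef
  set s := ‖b‖ with hsdef
  have hnorm : r ^ 2 + s ^ 2 = 1 := by
    have hdet2 : a * (starRingEnd ℂ) a + b * (starRingEnd ℂ) b = 1 := by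
      have h6 := hdet
      rw [Matrix.det_fin_two, hd, hc] at h6
      linear_combination h6
    have h7 : ((Complex.normSq a : ℝ) : ℂ) + ((Complex.normSq b : ℝ) : ℂ) = 1 := by
      rw [Complex.mul_conj, Complex.mul_conj] at hdet2
      exact_mod_cast hdet2
    have h3 : (Complex.normSq a : ℝ) + (Complex.normSq b : ℝ) = 1 := by
      exact_mod_cast h7
    rw [← Complex.sq_norm, ← Complex.sq_norm] at h3
    exact h3
  have hr1 : -1 ≤ r := le_trans (by norm_num) (norm_nonneg a)
  have hr2 : r ≤ 1 := by nlinarith [norm_nonneg b]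
  set θ := a.arg with hθ
  set ψ := b.arg with hψ
  set t := Real.arccos r with ht
  refine ⟨3*Real.pi/2 - ψ - θ, 2*t, ψ - θ + Real.pi/2, 0, θ - t, ?_⟩
  rw [Jprod]
  set X := Complex.exp ((t:ℂ) * Complex.I) with hX
  set E := Complex.exp ((θ:ℂ) * Complex.I) with hE
  set F := Complex.exp ((ψ:ℂ) * Complex.I) with hF
  have hXne : X ≠ 0 := Complex.exp_ne_zero _
  have hEne : E ≠ 0 := Complex.exp_ne_zero _
  have hFne : F ≠ 0 := Complex.exp_ne_zero _
  have hcos : ((r:ℝ):ℂ) * 2 = X + X⁻¹ := by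
    have h4 : Real.cos t = r := Real.cos_arccos hr1 hr2
    rw [← h4, Complex.ofReal_cos]
    rw [show Complex.cos (t:ℂ) = (Complex.exp ((t:ℂ)*Complex.I) + Complex.exp (-(t:ℂ)*Complex.I))/2 from rfl]
    rw [show (-(t:ℂ)*Complex.I) = -((t:ℂ)*Complex.I) by ring, Complex.exp_neg, ← hX]
    field_simp
  have hsin : ((s:ℝ):ℂ) * (2 * Complex.I) = X - X⁻¹ := by
    have h5 : Real.sin t = s := by
      rw [ht, Real.sin_arccos, show 1 - r^2 = s^2 by linarith, Real.sqrt_sq (norm_nonneg b)]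
    rw [← h5, Complex.ofReal_sin]
    rw [show Complex.sin (t:ℂ) = (Complex.exp (-(t:ℂ)*Complex.I) - Complex.exp ((t:ℂ)*Complex.I)) * Complex.I / 2 from rfl]
    rw [show (-(t:ℂ)*Complex.I) = -((t:ℂ)*Complex.I) by ring, Complex.exp_neg, ← hX]
    linear_combination (X⁻¹ - X) * Complex.I_mul_I
  have hpi2 : Complex.exp (((Real.pi/2 : ℝ):ℂ) * Complex.I) = Complex.I := by
    simp [Complex.exp_mul_I]
  have ephi : Complex.exp (Complex.I * ((θ - t : ℝ):ℂ)) = E * X⁻¹ := by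
    rw [show Complex.I * ((θ - t : ℝ):ℂ) = (θ:ℂ)*Complex.I - (t:ℂ)*Complex.I by push_cast; ring,
      Complex.exp_sub, hE, hX, div_eq_mul_inv]
  have ebeta : Complex.exp (Complex.I * ((2*t : ℝ):ℂ)) = X * X := by
    rw [show Complex.I * ((2*t : ℝ):ℂ) = (t:ℂ)*Complex.I + (t:ℂ)*Complex.I by push_cast; ring,
      Complex.exp_add, hX]
  have egamma : Complex.exp (Complex.I * ((ψ - θ + Real.pi/2 : ℝ):ℂ)) = F * E⁻¹ * Complex.I := by
    rw [show Complex.I * ((ψ - θ + Real.pi/2 : ℝ):ℂ)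
        = (ψ:ℂ)*Complex.I + (-((θ:ℂ)*Complex.I)) + ((Real.pi/2 : ℝ):ℂ)*Complex.I by push_cast; ring,
      Complex.exp_add, Complex.exp_add, Complex.exp_neg, hpi2, hF, hE]
  have ealpha : Complex.exp (Complex.I * ((3*Real.pi/2 - ψ - θ : ℝ):ℂ)) = -Complex.I * F⁻¹ * E⁻¹ := by
    rw [show Complex.I * ((3*Real.pi/2 - ψ - θ : ℝ):ℂ)
        = ((Real.pi : ℝ):ℂ)*Complex.I + ((Real.pi/2 : ℝ):ℂ)*Complex.I + (-((ψ:ℂ)*Complex.I)) + (-((θ:ℂ)*Complex.I)) by push_cast; ring,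
      Complex.exp_add, Complex.exp_add, Complex.exp_add, Complex.exp_neg, Complex.exp_neg,
      Complex.exp_pi_mul_I, hpi2, hF, hE]
    ring
  have hapolar : a = (r:ℂ) * E := by
    rw [hE, hθ, hrdef]; exact (Complex.norm_mul_exp_arg_mul_I a).symm
  have hbpolar : b = (s:ℂ) * F := by
    rw [hF, hψ, hsdef]; exact (Complex.norm_mul_exp_arg_mul_I b).symm
  have haconj : (starRingEnd ℂ) a = (r:ℂ) * E⁻¹ := by
    rw [hapolar, _root_.map_mul, Complex.conj_ofReal, hE, ← Complex.exp_conj]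
    simp [Complex.exp_neg]
  have hbconj : (starRingEnd ℂ) b = (s:ℂ) * F⁻¹ := by
    rw [hbpolar, _root_.map_mul, Complex.conj_ofReal, hF, ← Complex.exp_conj]
    simp [Complex.exp_neg]
  have hXi : X * X⁻¹ = 1 := mul_inv_cancel₀ hXne
  have hEi : E * E⁻¹ = 1 := mul_inv_cancel₀ hEne
  have hFi : F * F⁻¹ = 1 := mul_inv_cancel₀ hFne
  have hcos' : ((r:ℝ):ℂ) = (X + X⁻¹)/2 := by linear_combination hcos/2
  have hsin' : ((s:ℝ):ℂ) = (X⁻¹ - X) * Complex.I / 2 := by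
    linear_combination (-(Complex.I)/2) * hsin + ((s:ℝ):ℂ) * Complex.I_mul_I
  ext i j
  fin_cases i <;> fin_cases j <;> simp only [Matrix.smul_apply, Matrix.of_apply, Fin.zero_eta, Fin.mk_one,
      Fin.isValue, Matrix.cons_val', Matrix.cons_val_zero, Matrix.cons_val_one,
      Matrix.head_cons, Matrix.empty_val', Matrix.cons_val_fin_one, Matrix.head_fin_const,
      smul_eq_mul]
  · -- (0,0)
    show a = _
    rw [ephi, ebeta, hapolar, hcos']
    linear_combination (-(E*X/2)) * hXi
  · -- (0,1)
    show b = _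
    rw [ephi, ebeta, egamma, hbpolar, hsin']
    linear_combination (Complex.I*F*X/2)*hXi - (Complex.I*F*X⁻¹*(1-X*X)/2)*hEi
  · -- (1,0)
    show U 1 0 = _
    rw [hc, ephi, ebeta, ealpha, hbconj, hsin']
    linear_combination (-(Complex.I*F⁻¹*X/2))*hXi + (Complex.I*F⁻¹*X⁻¹*(1-X*X)/2)*hEi
  · -- (1,1)
    show U 1 1 = _
    rw [hd, ephi, ebeta, ealpha, egamma, haconj, hcos']
    linear_combination (-(E⁻¹*X/2))*hXi
      + (E⁻¹*F*F⁻¹*E*E⁻¹*X⁻¹*(1+X*X)/2)*Complex.I_mul_I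
      - (E*E⁻¹*X⁻¹*(1+X*X)*E⁻¹/2)*hFi
      - (X⁻¹*(1+X*X)*E⁻¹/2)*hEi
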